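/- Let F be a 2-connected cover in a planar graph G embedded in the sphere (G and all members of F are 2-connected). Let G_x ∈ F, let f be a face of G_x with U the set of vertices of G interior to f, and let G_x' = G[V(G_x) ∪ U]. Then F' = (F \ {G_x}) ∪ {G_x'} is again a 2-connected cover of G. -/

import Mathlib

open Finset

/-- A plane (equivalently, sphere) embedding of the simple graph `G`: vertices are
distinct points of the plane, each edge is drawn as a simple arc between the images of
its endpoints, arcs meet vertex points only at their endpoints, and two arcs of distinct
edges meet only in common endpoints. -/
structure PlaneEmbedding {V : Type} (G : SimpleGraph V) where
  pos : V → ℝ × ℝ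
  inj : Function.Injective pos
  arc : ∀ u v, G.Adj u v → Path (pos u) (pos v)
  arc_inj : ∀ u v (h : G.Adj u v), Function.Injective ⇑(arc u v h)
  arc_symm : ∀ u v (h : G.Adj u v), Set.range ⇑(arc v u h.symm) = Set.range ⇑(arc u v h)
  arc_vertex : ∀ u v (h : G.Adj u v) (w : V),
    pos w ∈ Set.range ⇑(arc u v h) → w = u ∨ w = v
  arc_disj : ∀ u v (h : G.Adj u v) u' v' (h' : G.Adj u' v'), s(u, v) ≠ s(u', v') →
    Set.range ⇑(arc u v h) ∩ Set.range ⇑(arc u' v' h') ⊆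
      ({pos u, pos v} : Set (ℝ × ℝ)) ∩ {pos u', pos v'}

/-- The drawing (point set in the plane) of the subgraph of `G` induced by `S`. -/
def drawing {V : Type} {G : SimpleGraph V} (E : PlaneEmbedding G) (S : Set V) :
    Set (ℝ × ℝ) :=
  (E.pos '' S) ∪
    ⋃ u, ⋃ v, ⋃ (_ : u ∈ S), ⋃ (_ : v ∈ S), ⋃ (h : G.Adj u v), Set.range ⇑(E.arc u v h)

/-- `f` is a face of the induced subgraph on `S` in the embedding `E`: a connected
component of the complement of its drawing. -/
def IsFaceOf {V : Type} {G : SimpleGraph V} (E : PlaneEmbedding G) (S : Set V)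
    (f : Set (ℝ × ℝ)) : Prop :=
  ∃ x ∈ (drawing E S)ᶜ, f = connectedComponentIn (drawing E S)ᶜ x

/-- The induced subgraph of `G` on `S` is 2-connected: it has at least 3 vertices and
deleting any single vertex leaves it connected. -/
def TwoConnectedOn {V : Type} (G : SimpleGraph V) (S : Set V) : Prop :=
  3 ≤ S.ncard ∧ ∀ v ∈ S, (G.induce (S \ {v})).Connected

/-- Z/2 boundary of a chain represented as a set of simplices. -/
def bdry {V : Type} [DecidableEq V] (c : Finset (Finset V)) : Finset (Finset V) :=
  (c.sup Finset.powerset).filter fun τ =>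
    Odd ((c.filter fun σ => τ ⊆ σ ∧ τ.card + 1 = σ.card).card)

def IsChainOf {V : Type} [DecidableEq V] (K : Finset (Finset V)) (d : ℕ)
    (c : Finset (Finset V)) : Prop :=
  ∀ σ ∈ c, σ ∈ K ∧ σ.card = d + 1

/-- Reduced simplicial Z/2-homology of the complex `K` is nonzero in dimension `d`. -/
def RedHomNonzero {V : Type} [DecidableEq V] (K : Finset (Finset V)) (d : ℕ) : Prop :=
  ∃ c : Finset (Finset V), IsChainOf K d c ∧ bdry c = ∅ ∧
    ∀ b : Finset (Finset V), IsChainOf K (d + 1) b → bdry b ≠ c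

/-- The nerve of a finite family of nonempty finite sets. -/
def nerveF {V ι : Type} [DecidableEq V] [Fintype V] [Fintype ι] [DecidableEq ι]
    (F : ι → Finset V) : Finset (Finset ι) :=
  Finset.univ.filter fun σ : Finset ι => σ.Nonempty ∧ (σ.inf F).Nonempty

/-- `F` is a connected cover in `G`: a family of (vertex sets of) induced subgraphs,
all of whose nonempty intersections induce connected subgraphs. -/
def IsConnCover {V ι : Type} [DecidableEq V] [Fintype V] [Fintype ι] [DecidableEq ι]
    (G : SimpleGraph V) (F : ι → Finset V) : Prop :=
  (∀ i, (F i).Nonempty) ∧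
  ∀ σ : Finset ι, σ.Nonempty → (σ.inf F).Nonempty →
    (G.induce ((σ.inf F : Finset V) : Set V)).Connected

/-- The homological dimension of `G` is at least `d`. -/
def GammaGe {V : Type} [DecidableEq V] [Fintype V] (G : SimpleGraph V) (d : ℕ) : Prop :=
  ∃ (n : ℕ) (F : Fin n → Finset V), IsConnCover G F ∧ RedHomNonzero (nerveF F) d

/-- The homological dimension of `G` equals the integer `m`:
`m` is the greatest `d` with `GammaGe G d` (and `m = -1` when there is none). -/
def HomDimEq {V : Type} [DecidableEq V] [Fintype V] (G : SimpleGraph V) (m : ℤ) : Prop :=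
  (∀ d : ℕ, m < (d : ℤ) → ¬ GammaGe G d) ∧ (∀ d : ℕ, (d : ℤ) = m → GammaGe G d)

/-- `H` is a minor of `G`. -/
def IsMinor {W V : Type} [Fintype W] [DecidableEq W] [Fintype V] [DecidableEq V]
    (H : SimpleGraph W) (G : SimpleGraph V) : Prop :=
  ∃ B : W → Finset V,
    (∀ w, (B w).Nonempty) ∧
    (∀ u w, u ≠ w → Disjoint (B u) (B w)) ∧
    (∀ w, (G.induce ((B w : Finset V) : Set V)).Connected) ∧
    (∀ u w, H.Adj u w → ∃ a ∈ B u, ∃ b ∈ B w, G.Adj a b)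


namespace Stmt12Aux

open SimpleGraph

variable {V : Type} {G : SimpleGraph V}

/-- `a` and `b` are joined by a walk in `G` all of whose vertices lie in `T`. -/
def RW (G : SimpleGraph V) (T : Set V) (a b : V) : Prop :=
  ∃ w : G.Walk a b, ∀ c ∈ w.support, c ∈ T

lemma RW.mono {T T' : Set V} (h : T ⊆ T') {a b : V} : RW G T a b → RW G T' a b :=
  fun ⟨w, hw⟩ => ⟨w, fun c hc => h (hw c hc)⟩

lemma RW.refl {T : Set V} {a : V} (ha : a ∈ T) : RW G T a a :=
  ⟨SimpleGraph.Walk.nil, by simp [ha]⟩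

lemma RW.symm {T : Set V} {a b : V} : RW G T a b → RW G T b a := fun ⟨w, hw⟩ =>
  ⟨w.reverse, fun c hc => hw c (by simpa [SimpleGraph.Walk.support_reverse] using hc)⟩

lemma RW.trans {T : Set V} {a b c : V} : RW G T a b → RW G T b c → RW G T a c :=
  fun ⟨w, hw⟩ ⟨w', hw'⟩ => ⟨w.append w', fun d hd => by
    rcases (SimpleGraph.Walk.mem_support_append_iff _ _).1 hd with h | h
    · exact hw d h
    · exact hw' d h⟩

lemma reachable_induce {T : Set V} : ∀ {a b : V} (w : G.Walk a b)
    (hw : ∀ c ∈ w.support, c ∈ T),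
    (G.induce T).Reachable ⟨a, hw a w.start_mem_support⟩ ⟨b, hw b w.end_mem_support⟩
  | _, _, SimpleGraph.Walk.nil, _ => SimpleGraph.Reachable.refl _
  | a, b, SimpleGraph.Walk.cons h p, hw => by
    have ha : a ∈ T := hw a (by simp)
    have h2 : ∀ c ∈ p.support, c ∈ T := fun c hc => hw c (by simp [hc])
    have hadj : (G.induce T).Adj ⟨a, ha⟩ ⟨_, h2 _ p.start_mem_support⟩ := h
    exact hadj.reachable.trans (reachable_induce p h2)

lemma connected_of_RW {T : Set V} (hne : T.Nonempty)
    (h : ∀ a ∈ T, ∀ b ∈ T, RW G T a b) : (G.induce T).Connected := by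
  rw [SimpleGraph.connected_iff]
  refine ⟨fun x y => ?_, ⟨⟨hne.choose, hne.choose_spec⟩⟩⟩
  obtain ⟨w, hw⟩ := h x x.2 y y.2
  exact reachable_induce w hw

lemma RW_of_connected {T : Set V} (h : (G.induce T).Connected) {a b : V}
    (ha : a ∈ T) (hb : b ∈ T) : RW G T a b := by
  obtain ⟨w⟩ := h.preconnected ⟨a, ha⟩ ⟨b, hb⟩
  refine ⟨w.map (SimpleGraph.Embedding.induce T).toHom, fun c hc => ?_⟩
  erw [SimpleGraph.Walk.support_map] at hc
  obtain ⟨d, _, rfl⟩ := List.mem_map.mp hc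
  exact d.2

lemma trunc {U' S : Set V} (hnbr : ∀ ⦃u v⦄, u ∈ U' → G.Adj u v → v ∈ U' ∨ v ∈ S) :
    ∀ {a b : V} (w : G.Walk a b), a ∈ U' → b ∉ U' →
    ∃ c ∈ S, ∃ w' : G.Walk a c, (∀ d ∈ w'.support, d ∈ w.support) ∧
      ∀ d ∈ w'.support, d = c ∨ d ∈ U'
  | _, _, SimpleGraph.Walk.nil, ha, hb => absurd ha hb
  | a, b, @SimpleGraph.Walk.cons _ _ _ e _ h p, ha, hb => by
    rcases hnbr ha h with h2 | h2
    · obtain ⟨c, hc, w', hsub, hU⟩ := trunc hnbr p h2 hb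
      refine ⟨c, hc, SimpleGraph.Walk.cons h w', ?_, ?_⟩
      · intro d hd
        simp only [SimpleGraph.Walk.support_cons, List.mem_cons] at hd ⊢
        rcases hd with rfl | hd
        · exact Or.inl rfl
        · exact Or.inr (hsub d hd)
      · intro d hd
        simp only [SimpleGraph.Walk.support_cons, List.mem_cons] at hd
        rcases hd with rfl | hd
        · exact Or.inr ha
        · exact hU d hd
    · refine ⟨e, h2, SimpleGraph.Walk.cons h SimpleGraph.Walk.nil, ?_, ?_⟩
      · intro d hd
        simp only [SimpleGraph.Walk.support_cons, SimpleGraph.Walk.support_nil,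
          List.mem_cons, List.not_mem_nil, or_false] at hd
        rcases hd with rfl | rfl
        · exact SimpleGraph.Walk.start_mem_support _
        · rw [SimpleGraph.Walk.support_cons]
          exact List.mem_cons_of_mem _ p.start_mem_support
      · intro d hd
        simp only [SimpleGraph.Walk.support_cons, SimpleGraph.Walk.support_nil,
          List.mem_cons, List.not_mem_nil, or_false] at hd
        rcases hd with rfl | rfl
        · exact Or.inr ha
        · exact Or.inl rfl

lemma stay {U' S : Set V} (hnbr : ∀ ⦃u v⦄, u ∈ U' → G.Adj u v → v ∈ U' ∨ v ∈ S) :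
    ∀ {a b : V} (w : G.Walk a b), a ∈ U' → (∀ d ∈ w.support, d ∉ S) →
      ∀ d ∈ w.support, d ∈ U'
  | _, _, SimpleGraph.Walk.nil, ha, _ => by simpa using ha
  | a, b, @SimpleGraph.Walk.cons _ _ _ e _ h p, ha, hS => by
    have hnext : e ∈ U' := by
      rcases hnbr ha h with h3 | h3
      · exact h3
      · refine absurd h3 (hS e ?_)
        rw [SimpleGraph.Walk.support_cons]
        exact List.mem_cons_of_mem _ p.start_mem_support
    intro d hd
    simp only [SimpleGraph.Walk.support_cons, List.mem_cons] at hd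
    rcases hd with rfl | hd
    · exact ha
    · exact stay hnbr p hnext (fun x hx => hS x (by
        rw [SimpleGraph.Walk.support_cons]; exact List.mem_cons_of_mem _ hx)) d hd

section Topology

variable [Fintype V] (E : PlaneEmbedding G)

lemma drawing_isClosed (S : Set V) : IsClosed (drawing E S) := by
  unfold drawing
  refine IsClosed.union ((S.toFinite.image E.pos).isClosed) ?_
  refine isClosed_iUnion_of_finite fun u => isClosed_iUnion_of_finite fun v => ?_
  refine isClosed_iUnion_of_finite fun _ => isClosed_iUnion_of_finite fun _ => ?_
  refine isClosed_iUnion_of_finite fun h => ?_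
  exact (isCompact_range (E.arc u v h).continuous).isClosed

lemma pos_mem_drawing {S : Set V} {u : V} (hu : u ∈ S) : E.pos u ∈ drawing E S :=
  Or.inl ⟨u, hu, rfl⟩

lemma face_subset {S : Set V} {f : Set (ℝ × ℝ)} (hf : IsFaceOf E S f) :
    f ⊆ (drawing E S)ᶜ := by
  obtain ⟨x, _, rfl⟩ := hf
  exact connectedComponentIn_subset _ _

lemma not_mem_of_mem_face {S : Set V} {f : Set (ℝ × ℝ)} (hf : IsFaceOf E S f) {u : V}
    (hu : E.pos u ∈ f) : u ∉ S := fun h => face_subset E hf hu (pos_mem_drawing E h)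

/-- The key topological fact: a neighbour of a vertex interior to a face `f` of the
induced subgraph on `S` is either in `S` or interior to `f` as well. -/
lemma nbr {S : Set V} {f : Set (ℝ × ℝ)} (hf : IsFaceOf E S f) {u v : V}
    (hu : E.pos u ∈ f) (h : G.Adj u v) : E.pos v ∈ f ∨ v ∈ S := by
  by_cases hvS : v ∈ S
  · exact Or.inr hvS
  left
  have huS : u ∉ S := not_mem_of_mem_face E hf hu
  -- the whole arc from u to v avoids the drawing of S
  have harc : Set.range ⇑(E.arc u v h) ⊆ (drawing E S)ᶜ := by
    intro p hp hpD
    rcases hpD with ⟨w, hwS, hwp⟩ | hpD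
    · rcases E.arc_vertex u v h w (hwp ▸ hp) with rfl | rfl
      · exact huS hwS
      · exact hvS hwS
    · simp only [Set.mem_iUnion] at hpD
      obtain ⟨u', v', hu', hv', h', hp'⟩ := hpD
      have hne : s(u, v) ≠ s(u', v') := by
        intro he
        rcases Sym2.eq_iff.mp he with ⟨rfl, rfl⟩ | ⟨rfl, rfl⟩
        · exact huS hu'
        · exact huS hv'
      obtain ⟨hA, hB⟩ := E.arc_disj u v h u' v' h' hne ⟨hp, hp'⟩
      simp only [Set.mem_insert_iff, Set.mem_singleton_iff] at hA hB
      rcases hA with rfl | rfl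
      · rcases hB with h2 | h2
        · exact huS (by rw [E.inj h2]; exact hu')
        · exact huS (by rw [E.inj h2]; exact hv')
      · rcases hB with h2 | h2
        · exact hvS (by rw [E.inj h2]; exact hu')
        · exact hvS (by rw [E.inj h2]; exact hv')
  -- the arc is connected and meets f, so it is contained in f
  have hconn : IsPreconnected (Set.range ⇑(E.arc u v h)) :=
    isPreconnected_range (E.arc u v h).continuous
  have hsub : Set.range ⇑(E.arc u v h) ⊆ f := by
    obtain ⟨x₀, hx₀, rfl⟩ := hf
    have hmem : E.pos u ∈ Set.range ⇑(E.arc u v h) := ⟨0, (E.arc u v h).source⟩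
    rw [connectedComponentIn_eq hu]
    exact hconn.subset_connectedComponentIn hmem harc
  exact hsub ⟨1, (E.arc u v h).target⟩

end Topology

end Stmt12Aux

/-- let `F` be a 2-connected cover in a planar graph `G` with a fixed
embedding (`G` and every member are 2-connected).  If `F'` is obtained from `F` by
filling a face of the member `F x` (adding all vertices of `G` interior to that face),
then `F'` is again a 2-connected cover of `G`. -/
theorem stmt12 {V : Type} [Fintype V] [DecidableEq V] (G : SimpleGraph V)
    (E : PlaneEmbedding G) (n : ℕ) (F : Fin n → Finset V)
    (hcov : IsConnCover G F)
    (hG2 : TwoConnectedOn G Set.univ)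
    (h2 : ∀ i, TwoConnectedOn G ((F i : Finset V) : Set V))
    (x : Fin n) (f : Set (ℝ × ℝ)) (hf : IsFaceOf E ((F x : Finset V) : Set V) f)
    (U : Finset V) (hU : (U : Set V) = {w : V | E.pos w ∈ f}) :
    IsConnCover G (Function.update F x (F x ∪ U)) ∧
    ∀ i, TwoConnectedOn G (((Function.update F x (F x ∪ U)) i : Finset V) : Set V) := by
  classical
  obtain ⟨hcov1, hcov2⟩ := hcov
  -- basic membership facts
  have hnbr : ∀ ⦃u v : V⦄, u ∈ (↑U : Set V) → G.Adj u v →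
      v ∈ (↑U : Set V) ∨ v ∈ ((F x : Finset V) : Set V) := by
    intro u v hu hadj
    rcases Stmt12Aux.nbr E hf (by rw [hU] at hu; exact hu) hadj with hh | hh
    · left; rw [hU]; exact hh
    · exact Or.inr hh
  have hUS : ∀ u : V, u ∈ (↑U : Set V) → u ∉ ((F x : Finset V) : Set V) := fun u hu =>
    Stmt12Aux.not_mem_of_mem_face E hf (by rw [hU] at hu; exact hu)
  have hcard : 3 ≤ (F x).card := by
    have := (h2 x).1; rwa [Set.ncard_coe_finset] at this
  have hcardV : 3 ≤ Fintype.card V := by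
    have := hG2.1; rwa [Set.ncard_univ, Nat.card_eq_fintype_card] at this
  have hdelRW : ∀ (v a b : V), a ≠ v → b ≠ v →
      Stmt12Aux.RW G (Set.univ \ {v}) a b := by
    intro v a b ha hb
    exact Stmt12Aux.RW_of_connected (hG2.2 v (Set.mem_univ v))
      ⟨trivial, by simpa using ha⟩ ⟨trivial, by simpa using hb⟩
  have hRWuniv : ∀ a b : V, Stmt12Aux.RW G Set.univ a b := by
    intro a b
    have h1 : 1 < (Finset.univ.erase a).card := by
      rw [Finset.card_erase_of_mem (Finset.mem_univ a), Finset.card_univ]; omega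
    obtain ⟨v, hv, hvb⟩ := Finset.exists_mem_ne h1 b
    exact (hdelRW v a b (Ne.symm (Finset.mem_erase.mp hv).1) (Ne.symm hvb)).mono
      Set.diff_subset
  -- connecting an interior vertex to `F x` while avoiding a vertex `v`
  have hUtoS : ∀ (v u : V), u ∈ (↑U : Set V) → u ≠ v → ∃ c ∈ F x, c ≠ v ∧
      Stmt12Aux.RW G (((↑(F x) ∪ ↑U) \ {v}) : Set V) u c := by
    intro v u hu hune
    obtain ⟨s₀, hs₀, hs₀v⟩ := Finset.exists_mem_ne
      (by omega : 1 < (F x).card) v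
    obtain ⟨w, hw⟩ := hdelRW v u s₀ hune hs₀v
    have hbU : s₀ ∉ (↑U : Set V) := fun hb => hUS s₀ hb hs₀
    obtain ⟨c, hc, w', hsub, hU'⟩ := Stmt12Aux.trunc hnbr w hu hbU
    have hcne : c ≠ v := by
      have := hw c (hsub c w'.end_mem_support)
      simpa using this.2
    refine ⟨c, hc, hcne, ⟨w', fun d hd => ?_⟩⟩
    have hdv : d ∈ Set.univ \ {v} := hw d (hsub d hd)
    rcases hU' d hd with rfl | hdU
    · exact ⟨Or.inl hc, hdv.2⟩
    · exact ⟨Or.inr hdU, hdv.2⟩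
  refine ⟨⟨?_, ?_⟩, ?_⟩
  · -- all members nonempty
    intro i
    by_cases hi : i = x
    · subst hi
      rw [Function.update_self]
      exact (hcov1 i).mono Finset.subset_union_left
    · rw [Function.update_of_ne hi]
      exact hcov1 i
  · -- intersections connected
    intro σ hσne hσinf
    by_cases hx : x ∈ σ
    case neg =>
      have heq : σ.inf (Function.update F x (F x ∪ U)) = σ.inf F :=
        Finset.inf_congr rfl fun i hi =>
          Function.update_of_ne (by rintro rfl; exact hx hi) _ _
      rw [heq] at hσinf ⊢
      exact hcov2 σ hσne hσinf
    case pos =>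
      have hinf_eq : σ.inf (Function.update F x (F x ∪ U)) =
          (F x ∪ U) ∩ (σ.erase x).inf F := by
        conv_lhs => rw [← Finset.insert_erase hx]
        rw [Finset.inf_insert, Function.update_self,
          Finset.inf_congr rfl fun i hi =>
            Function.update_of_ne (Finset.ne_of_mem_erase hi) _ _,
          Finset.inf_eq_inter]
      rw [hinf_eq] at hσinf ⊢
      have hTset : ((((F x ∪ U) ∩ (σ.erase x).inf F) : Finset V) : Set V) =
          ((↑(F x) ∪ ↑U) ∩ ↑((σ.erase x).inf F) : Set V) := by
        rw [Finset.coe_inter, Finset.coe_union]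
      rw [hTset]
      have hPset : ∀ p ∈ (↑((σ.erase x).inf F) : Set V),
          ∀ q ∈ (↑((σ.erase x).inf F) : Set V),
          Stmt12Aux.RW G (↑((σ.erase x).inf F)) p q := by
        by_cases he : σ.erase x = ∅
        · intro p _ q _
          have hPu : ((σ.erase x).inf F : Finset V) = Finset.univ := by
            rw [he, Finset.inf_empty, Finset.top_eq_univ]
          rw [hPu, Finset.coe_univ]
          exact hRWuniv p q
        · intro p hp q hq
          exact Stmt12Aux.RW_of_connected
            (hcov2 _ (Finset.nonempty_iff_ne_empty.mpr he) ⟨p, hp⟩) hp hq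
      apply Stmt12Aux.connected_of_RW
      · rw [← hTset]
        exact Finset.coe_nonempty.mpr hσinf
      intro a ha b hb
      by_cases hA : ((↑(F x) : Set V) ∩ ↑((σ.erase x).inf F)) = ∅
      · -- the old member misses the intersection: everything stays interior
        have haU : a ∈ (↑U : Set V) := by
          rcases ha.1 with haF | haU
          · exact absurd (Set.mem_inter haF ha.2) (by rw [hA]; exact Set.notMem_empty a)
          · exact haU
        obtain ⟨w, hw⟩ := hPset a ha.2 b hb.2
        have hsup := Stmt12Aux.stay hnbr w haU (fun d hd hdS =>
          Set.eq_empty_iff_forall_notMem.mp hA d ⟨hdS, hw d hd⟩)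
        exact ⟨w, fun d hd => ⟨Or.inr (hsup d hd), hw d hd⟩⟩
      · -- route through the old intersection
        have hAne := Set.nonempty_iff_ne_empty.mpr hA
        have hAeq : ((σ.inf F : Finset V) : Set V) =
            ((↑(F x) : Set V) ∩ ↑((σ.erase x).inf F)) := by
          conv_lhs => rw [← Finset.insert_erase hx]
          rw [Finset.inf_insert, Finset.inf_eq_inter, Finset.coe_inter]
        have hinfFne : (σ.inf F).Nonempty := by
          rw [← Finset.coe_nonempty, hAeq]; exact hAne
        have hconA := hcov2 σ hσne hinfFne
        rw [hAeq] at hconA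
        have hAsub : ((↑(F x) : Set V) ∩ ↑((σ.erase x).inf F)) ⊆
            (↑(F x) ∪ ↑U) ∩ ↑((σ.erase x).inf F) := fun p hp => ⟨Or.inl hp.1, hp.2⟩
        have hreach : ∀ t ∈ ((↑(F x) ∪ ↑U) ∩ ↑((σ.erase x).inf F) : Set V),
            ∃ c ∈ ((↑(F x) : Set V) ∩ ↑((σ.erase x).inf F)),
            Stmt12Aux.RW G ((↑(F x) ∪ ↑U) ∩ ↑((σ.erase x).inf F)) t c := by
          intro t ht
          by_cases htF : t ∈ (↑(F x) : Set V)
          · exact ⟨t, ⟨htF, ht.2⟩, Stmt12Aux.RW.refl ht⟩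
          · have htU : t ∈ (↑U : Set V) := ht.1.resolve_left htF
            obtain ⟨a₀, ha₀⟩ := hAne
            obtain ⟨w, hw⟩ := hPset t ht.2 a₀ ha₀.2
            have ha₀U : a₀ ∉ (↑U : Set V) := fun hc => hUS a₀ hc ha₀.1
            obtain ⟨c, hcF, w', hsub, hU'⟩ := Stmt12Aux.trunc hnbr w htU ha₀U
            have hcP : c ∈ (↑((σ.erase x).inf F) : Set V) :=
              hw c (hsub c w'.end_mem_support)
            refine ⟨c, ⟨hcF, hcP⟩, ⟨w', fun d hd => ?_⟩⟩
            have hdP := hw d (hsub d hd)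
            rcases hU' d hd with rfl | hdU
            · exact ⟨Or.inl hcF, hdP⟩
            · exact ⟨Or.inr hdU, hdP⟩
        obtain ⟨ca, hca, hwa⟩ := hreach a ha
        obtain ⟨cb, hcb, hwb⟩ := hreach b hb
        have hmid := (Stmt12Aux.RW_of_connected hconA hca hcb).mono hAsub
        exact (hwa.trans hmid).trans hwb.symm
  · -- two-connectivity of all members
    intro i
    by_cases hi : i = x
    · subst hi
      rw [Function.update_self]
      constructor
      · rw [Set.ncard_coe_finset]
        exact le_trans hcard (Finset.card_le_card Finset.subset_union_left)
      · intro v hv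
        rw [Finset.coe_union]
        obtain ⟨s₀, hs₀, hs₀v⟩ := Finset.exists_mem_ne
          (by omega : 1 < (F i).card) v
        have hRS : ∀ p ∈ ((↑(F i) : Set V) \ {v}), ∀ q ∈ ((↑(F i) : Set V) \ {v}),
            Stmt12Aux.RW G ((↑(F i) : Set V) \ {v}) p q := by
          by_cases hvF : v ∈ (↑(F i) : Set V)
          · intro p hp q hq
            exact Stmt12Aux.RW_of_connected ((h2 i).2 v hvF) hp hq
          · have hdiff : ((↑(F i) : Set V) \ {v}) = ↑(F i) :=
              Set.diff_singleton_eq_self hvF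
            rw [hdiff]
            have hFcon : (G.induce (↑(F i) : Set V)).Connected := by
              have h0 := hcov2 {i} ⟨i, Finset.mem_singleton_self i⟩
                (by rw [Finset.inf_singleton]; exact hcov1 i)
              rwa [Finset.inf_singleton] at h0
            intro p hp q hq
            exact Stmt12Aux.RW_of_connected hFcon hp hq
        have hsubS : ((↑(F i) : Set V) \ {v}) ⊆ (↑(F i) ∪ ↑U) \ {v} :=
          fun p hp => ⟨Or.inl hp.1, hp.2⟩
        have hreach : ∀ t ∈ ((↑(F i) ∪ ↑U : Set V) \ {v}),
            ∃ c ∈ ((↑(F i) : Set V) \ {v}),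
            Stmt12Aux.RW G ((↑(F i) ∪ ↑U) \ {v}) t c := by
          intro t ht
          rcases ht.1 with htF | htU
          · exact ⟨t, ⟨htF, ht.2⟩, Stmt12Aux.RW.refl ht⟩
          · have htv : t ≠ v := by simpa using ht.2
            obtain ⟨c, hcF, hcv, hwc⟩ := hUtoS v t htU htv
            exact ⟨c, ⟨hcF, by simpa using hcv⟩, hwc⟩
        apply Stmt12Aux.connected_of_RW
        · exact ⟨s₀, ⟨Or.inl hs₀, by simpa using hs₀v⟩⟩
        intro a ha b hb
        obtain ⟨ca, hca, hwa⟩ := hreach a ha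
        obtain ⟨cb, hcb, hwb⟩ := hreach b hb
        have hmid := (hRS ca hca cb hcb).mono hsubS
        exact (hwa.trans hmid).trans hwb.symm
    · rw [Function.update_of_ne hi]
      exact h2 i
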